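/- For a connected simple graph G and n agents sharing an identical utility function u, every connected leximin allocation is both PMMS and MMS; in particular, a connected allocation that is simultaneously PMMS and MMS exists. -/

import Mathlib

namespace GraphFair

variable {V : Type*}

/-- A bundle is connected if it is empty or induces a connected subgraph of `G`. -/
def BundleConn (G : SimpleGraph V) (B : Finset V) : Prop :=
  B = ∅ ∨ (G.induce (B : Set V)).Connected

/-- A connected allocation of all the items among `n` agents: the bundles cover `V`,
are pairwise disjoint, and each bundle is connected in `G`. -/
def IsConnAlloc (G : SimpleGraph V) {n : ℕ} (A : Fin n → Finset V) : Prop :=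
  (∀ v : V, ∃ i, v ∈ A i) ∧
  (∀ i j : Fin n, i ≠ j → Disjoint (A i) (A j)) ∧
  (∀ i, BundleConn G (A i))

variable [DecidableEq V]

/-- Partitions of `X` into two bundles, each connected in the induced subgraph `G[X]`
(for `Y ⊆ X`, connectivity of `Y` in `G[X]` is the same as connectivity of `Y` in `G`). -/
def Part2 (G : SimpleGraph V) (X : Finset V) : Set (Finset V × Finset V) :=
  {p | p.1 ∪ p.2 = X ∧ Disjoint p.1 p.2 ∧ BundleConn G p.1 ∧ BundleConn G p.2}

/-- The pairwise maximin share of a bundle `X` with respect to utility `u`: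
the maximum over partitions of `X` into two connected bundles of the minimum utility. -/
noncomputable def pmms (G : SimpleGraph V) (u : Finset V → ℝ) (X : Finset V) : ℝ :=
  sSup ((fun p : Finset V × Finset V => min (u p.1) (u p.2)) '' Part2 G X)

/-- The `n`-agent maximin share of the whole vertex set: maximum over partitions of `V`
into `n` connected bundles of the minimum utility of a bundle. -/
noncomputable def mms (G : SimpleGraph V) (u : Finset V → ℝ) (n : ℕ) : ℝ :=
  sSup ((fun A : Fin n → Finset V => ⨅ i, u (A i)) '' {A | IsConnAlloc G A})

/-- Agents `i` and `j` are adjacent under allocation `A`. -/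
def AdjUnder (G : SimpleGraph V) {n : ℕ} (A : Fin n → Finset V) (i j : Fin n) : Prop :=
  ∃ v ∈ A i, ∃ w ∈ A j, G.Adj v w

/-- An allocation is `α`-PMMS if every agent with an empty bundle, and every agent with
respect to each of her neighbours, receives at least `α` times her pairwise maximin share. -/
def IsAlphaPMMS (G : SimpleGraph V) {n : ℕ} (u : Fin n → Finset V → ℝ)
    (A : Fin n → Finset V) (α : ℝ) : Prop :=
  ∀ i j : Fin n, i ≠ j → (A i = ∅ ∨ AdjUnder G A i j) →
    α * pmms G (u i) (A i ∪ A j) ≤ u i (A i)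

/-- An allocation is `α`-MMS if every agent receives at least `α` times her maximin share. -/
def IsAlphaMMS (G : SimpleGraph V) {n : ℕ} (u : Fin n → Finset V → ℝ)
    (A : Fin n → Finset V) (α : ℝ) : Prop :=
  ∀ i : Fin n, α * mms G (u i) n ≤ u i (A i)

/-- An additive (nonnegative) utility function. -/
def AdditiveUtil (u : Finset V → ℝ) : Prop :=
  (∀ X : Finset V, u X = ∑ v ∈ X, u {v}) ∧ ∀ v : V, 0 ≤ u {v}

/-- A binary additive utility function. -/
def BinaryAdditiveUtil (u : Finset V → ℝ) : Prop :=
  (∀ X : Finset V, u X = ∑ v ∈ X, u {v}) ∧ ∀ v : V, u {v} = 0 ∨ u {v} = 1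

/-- A monotone (nonnegative) utility function. -/
def MonotoneUtil (u : Finset V → ℝ) : Prop :=
  (∀ X Y : Finset V, X ⊆ Y → u X ≤ u Y) ∧ 0 ≤ u ∅

/-- An allocation is `α`-EF1. -/
def IsAlphaEF1 {n : ℕ} (u : Fin n → Finset V → ℝ) (A : Fin n → Finset V) (α : ℝ) : Prop :=
  ∀ i j : Fin n, i ≠ j → A j ≠ ∅ → ∃ v ∈ A j, α * u i ((A j).erase v) ≤ u i (A i)

/-- An allocation is EFX (envy-free up to any item). -/
def IsEFX {n : ℕ} (u : Fin n → Finset V → ℝ) (A : Fin n → Finset V) : Prop :=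
  ∀ i j : Fin n, i ≠ j → A j ≠ ∅ → ∀ v ∈ A j, u i ((A j).erase v) ≤ u i (A i)

/-- The number of agents receiving positive utility. -/
noncomputable def nashCount {n : ℕ} (u : Fin n → Finset V → ℝ) (A : Fin n → Finset V) : ℕ :=
  (Finset.univ.filter fun i : Fin n => 0 < u i (A i)).card

/-- The product of the positive utilities. -/
noncomputable def nashProd {n : ℕ} (u : Fin n → Finset V → ℝ) (A : Fin n → Finset V) : ℝ :=
  ∏ i ∈ Finset.univ.filter (fun i : Fin n => 0 < u i (A i)), u i (A i)

/-- A maximum Nash welfare (MNW) connected allocation: maximizes the number of agents with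
positive utility and, subject to that, the product of the positive utilities. -/
def IsMNW (G : SimpleGraph V) {n : ℕ} (u : Fin n → Finset V → ℝ)
    (A : Fin n → Finset V) : Prop :=
  IsConnAlloc G A ∧
  (∀ B : Fin n → Finset V, IsConnAlloc G B → nashCount u B ≤ nashCount u A) ∧
  (∀ B : Fin n → Finset V, IsConnAlloc G B →
    nashCount u B = nashCount u A → nashProd u B ≤ nashProd u A)

/-- `A'` is a Pareto-improvement of `A`. -/
def ParetoImproves {n : ℕ} (u : Fin n → Finset V → ℝ) (A' A : Fin n → Finset V) : Prop :=
  (∀ i, u i (A i) ≤ u i (A' i)) ∧ ∃ j, u j (A j) < u j (A' j)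

/-- A connected allocation is Pareto-optimal if no connected allocation Pareto-improves it. -/
def IsParetoOptimal (G : SimpleGraph V) {n : ℕ} (u : Fin n → Finset V → ℝ)
    (A : Fin n → Finset V) : Prop :=
  ∀ B : Fin n → Finset V, IsConnAlloc G B → ¬ ParetoImproves u B A

/-- The vector of agents' utilities rearranged in increasing order. -/
noncomputable def sortedUtils {n : ℕ} (u : Fin n → Finset V → ℝ)
    (A : Fin n → Finset V) : List ℝ :=
  (((Finset.univ : Finset (Fin n)).val.map fun i => u i (A i)).sort (· ≤ ·))

/-- `A'` is a leximin improvement of `A`: the sorted utility vector of `A'` is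
lexicographically greater than that of `A`. -/
def LeximinImproves {n : ℕ} (u : Fin n → Finset V → ℝ) (A' A : Fin n → Finset V) : Prop :=
  List.Lex (· < ·) (sortedUtils u A) (sortedUtils u A')

/-- A connected leximin allocation. -/
def IsLeximin (G : SimpleGraph V) {n : ℕ} (u : Fin n → Finset V → ℝ)
    (A : Fin n → Finset V) : Prop :=
  IsConnAlloc G A ∧ ∀ B : Fin n → Finset V, IsConnAlloc G B → ¬ LeximinImproves u B A

/-- `G` is a star: there is a central vertex adjacent to exactly all other vertices. -/
def IsStar (G : SimpleGraph V) : Prop :=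
  ∃ c : V, ∀ a b : V, G.Adj a b ↔ a ≠ b ∧ (a = c ∨ b = c)

/-- A submodular utility function. -/
def SubmodularUtil (u : Finset V → ℝ) : Prop :=
  ∀ X Y : Finset V, u (X ∪ Y) + u (X ∩ Y) ≤ u X + u Y

/-- A utility function with binary marginal gains (and `u ∅ = 0`). -/
def BinaryMarginalGains (u : Finset V → ℝ) : Prop :=
  u ∅ = 0 ∧ ∀ (X : Finset V) (v : V),
    u (insert v X) - u X = 0 ∨ u (insert v X) - u X = 1

/-- On the path with `m` vertices (edges numbered `1, …, m-1` from left to right),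
`itv m x y` is the bundle `[x, y]` of all vertices between positions `x` and `y`. -/
def itv (m x y : ℕ) : Finset (Fin m) :=
  Finset.univ.filter fun v : Fin m => x ≤ v.val ∧ v.val < y

end GraphFair


section LexAux

open List

private lemma gf_countP_sort (p : ℝ → Prop) [DecidablePred p] (m : Multiset ℝ) :
    List.countP (fun b => decide (p b)) (Multiset.sort m (· ≤ ·)) = Multiset.countP p m := by
  rw [← Multiset.coe_countP, Multiset.sort_eq]

private lemma gf_countP_ge (p : ℝ → Bool)
    (hp : ∀ u v : ℝ, u ≤ v → p v = true → p u = true) :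
    ∀ (L : List ℝ), L.Pairwise (· ≤ ·) → ∀ i (hi : i < L.length),
      p (L[i]'hi) = true → i + 1 ≤ L.countP p := by
  intro L
  induction L with
  | nil => intro _ i hi; simp at hi
  | cons b T ih =>
    intro hs i hi hpi
    rw [List.pairwise_cons] at hs
    cases i with
    | zero =>
      simp only [List.getElem_cons_zero] at hpi
      rw [List.countP_cons, hpi]
      simp
    | succ j =>
      have hj : j < T.length := by simpa using hi
      have hpT : p (T[j]'hj) = true := by simpa using hpi
      have hb : p b = true := hp b (T[j]'hj) (hs.1 _ (List.getElem_mem hj)) hpT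
      rw [List.countP_cons, hb, if_pos rfl]
      have := ih hs.2 j hj hpT
      omega

private lemma gf_countP_le (p : ℝ → Bool)
    (hp : ∀ u v : ℝ, u ≤ v → p v = true → p u = true) :
    ∀ (L : List ℝ), L.Pairwise (· ≤ ·) → ∀ i (hi : i < L.length),
      p (L[i]'hi) = false → L.countP p ≤ i := by
  intro L
  induction L with
  | nil => intro _ i hi; simp at hi
  | cons b T ih =>
    intro hs i hi hpi
    rw [List.pairwise_cons] at hs
    cases i with
    | zero =>
      simp only [List.getElem_cons_zero] at hpi
      have hT : T.countP p = 0 := by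
        rw [List.countP_eq_zero]
        intro x hx hpx
        have hb : p b = true := hp b x (hs.1 x hx) hpx
        rw [hpi] at hb; exact Bool.false_ne_true hb
      rw [List.countP_cons, hT, hpi]
      simp
    | succ j =>
      have hj : j < T.length := by simpa using hi
      have hpT : p (T[j]'hj) = false := by simpa using hpi
      have := ih hs.2 j hj hpT
      rw [List.countP_cons]
      split <;> omega

private lemma gf_lex_of_prefix : ∀ (k : ℕ) (L M : List ℝ) (hk1 : k < L.length)
    (hk2 : k < M.length),
    (∀ j (hj : j < k), L[j]'(hj.trans hk1) ≤ M[j]'(hj.trans hk2)) →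
    (L[k]'hk1) < (M[k]'hk2) → List.Lex (· < ·) L M := by
  intro k
  induction k with
  | zero =>
    intro L M h1 h2 _ hlt
    match L, M, h1, h2 with
    | a :: L', b :: M', _, _ => exact List.Lex.rel (by simpa using hlt)
  | succ k ih =>
    intro L M h1 h2 hle hlt
    match L, M, h1, h2 with
    | a :: L', b :: M', h1, h2 =>
      have h0 : a ≤ b := by simpa using hle 0 (Nat.succ_pos k)
      rcases lt_or_eq_of_le h0 with h | h
      · exact List.Lex.rel h
      · subst h
        refine List.Lex.cons (ih L' M' (Nat.lt_of_succ_lt_succ h1) (Nat.lt_of_succ_lt_succ h2)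
          (fun j hj => by simpa using hle (j+1) (Nat.succ_lt_succ hj))
          (by simpa using hlt))

private lemma gf_lex_sort_replace (s : Multiset ℝ) (a c y z : ℝ) (hy : a < y) (hz : a < z) :
    List.Lex (· < ·) (Multiset.sort (a ::ₘ c ::ₘ s) (· ≤ ·))
      (Multiset.sort (y ::ₘ z ::ₘ s) (· ≤ ·)) := by
  classical
  set L := Multiset.sort (a ::ₘ c ::ₘ s) (· ≤ ·) with hLdef
  set M := Multiset.sort (y ::ₘ z ::ₘ s) (· ≤ ·) with hMdef
  have hLs : L.Pairwise (· ≤ ·) := Multiset.pairwise_sort _ _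
  have hMs : M.Pairwise (· ≤ ·) := Multiset.pairwise_sort _ _
  have hLlen : L.length = Multiset.card s + 2 := by
    simp [hLdef, Multiset.length_sort]
  have hMlen : M.length = Multiset.card s + 2 := by
    simp [hMdef, Multiset.length_sort]
  set m : ℝ := min y z with hmdef
  have hm : a < m := lt_min hy hz
  have hym : ¬ (y < m) := not_lt.mpr (min_le_left y z)
  have hzm : ¬ (z < m) := not_lt.mpr (min_le_right y z)
  set p : ℝ → Bool := fun x => decide (x < m) with hpdef
  have hp : ∀ u v : ℝ, u ≤ v → p v = true → p u = true := by
    intro u v huv hv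
    simp only [hpdef, decide_eq_true_eq] at hv ⊢
    exact lt_of_le_of_lt huv hv
  have hcM : M.countP p = Multiset.countP (fun x => x < m) s := by
    rw [hMdef]
    rw [gf_countP_sort (fun x => x < m)]
    rw [Multiset.countP_cons_of_neg (p := fun x => x < m) _ hym,
      Multiset.countP_cons_of_neg (p := fun x => x < m) _ hzm]
  have hcL : Multiset.countP (fun x => x < m) s + 1 ≤ L.countP p := by
    rw [hLdef, gf_countP_sort (fun x => x < m)]
    rw [Multiset.countP_cons_of_pos (p := fun x => x < m) _ hm,
      Multiset.countP_cons (fun x => x < m)]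
    split <;> omega
  have hkM_card : M.countP p ≤ Multiset.card s := by
    rw [hcM]; exact Multiset.countP_le_card _ _
  have hkM_M : M.countP p < M.length := by omega
  have hkM_L : M.countP p < L.length := by omega
  have hMk : ¬ ((M[M.countP p]'hkM_M) < m) := by
    intro hlt
    have := gf_countP_ge p hp M hMs (M.countP p) hkM_M (decide_eq_true hlt)
    omega
  have hLk : (L[M.countP p]'hkM_L) < m := by
    by_contra hge
    have := gf_countP_le p hp L hLs (M.countP p) hkM_L
      (by simp only [hpdef, decide_eq_false_iff_not]; exact hge)
    omega
  refine gf_lex_of_prefix (M.countP p) L M hkM_L hkM_M ?_ (lt_of_lt_of_le hLk (not_lt.mp hMk))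
  intro j hj
  have hjM : j < M.length := hj.trans hkM_M
  have hjL : j < L.length := hj.trans hkM_L
  have hMj : (M[j]'hjM) < m := by
    by_contra hge
    have := gf_countP_le p hp M hMs j hjM
      (by simp only [hpdef, decide_eq_false_iff_not]; exact hge)
    omega
  set x : ℝ := M[j]'hjM with hxdef
  set q : ℝ → Bool := fun w => decide (w ≤ x) with hqdef
  have hq : ∀ u v : ℝ, u ≤ v → q v = true → q u = true := by
    intro u v huv hv
    simp only [hqdef, decide_eq_true_eq] at hv ⊢
    exact le_trans huv hv
  have hyx : ¬ (y ≤ x) := not_le.mpr (lt_of_lt_of_le hMj (min_le_left y z))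
  have hzx : ¬ (z ≤ x) := not_le.mpr (lt_of_lt_of_le hMj (min_le_right y z))
  have hcMq : M.countP q = Multiset.countP (fun w => w ≤ x) s := by
    rw [hMdef, gf_countP_sort (fun w => w ≤ x)]
    rw [Multiset.countP_cons_of_neg (p := fun w => w ≤ x) _ hyx,
      Multiset.countP_cons_of_neg (p := fun w => w ≤ x) _ hzx]
  have hjq : j + 1 ≤ M.countP q :=
    gf_countP_ge q hq M hMs j hjM (by simp [hqdef, hxdef])
  have hcLq : Multiset.countP (fun w => w ≤ x) s ≤ L.countP q := by
    rw [hLdef, gf_countP_sort (fun w => w ≤ x)]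
    rw [Multiset.countP_cons (fun w => w ≤ x), Multiset.countP_cons (fun w => w ≤ x)]
    split <;> split <;> omega
  have hLjq : q (L[j]'hjL) = true := by
    by_contra hfalse
    have := gf_countP_le q hq L hLs j hjL (by simpa using hfalse)
    omega
  simpa [hqdef] using hLjq

private lemma gf_sorted_head_le {L : List ℝ} (hL : L.Pairwise (· ≤ ·)) (h0 : 0 < L.length)
    {x : ℝ} (hx : x ∈ L) : (L[0]'h0) ≤ x := by
  match L, h0 with
  | b :: T, _ =>
    rcases List.mem_cons.mp hx with rfl | h
    · simp
    · simpa using (List.pairwise_cons.mp hL).1 x h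

end LexAux

open GraphFair in
/-- For a connected simple graph `G` and `n` agents sharing an identical
utility function `u`, every connected leximin allocation is both PMMS and MMS;
in particular, a connected allocation that is simultaneously PMMS and MMS exists. -/
theorem leximin_is_pmms_and_mms_identical {V : Type*} [Fintype V] [DecidableEq V]
    (G : SimpleGraph V) (hG : G.Connected)
    {n : ℕ} (hn : 0 < n) (u : Finset V → ℝ) (hu : ∀ X : Finset V, 0 ≤ u X) :
    (∀ A : Fin n → Finset V, IsLeximin G (fun _ => u) A →
      IsAlphaPMMS G (fun _ => u) A 1 ∧ IsAlphaMMS G (fun _ => u) A 1) ∧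
    ∃ A : Fin n → Finset V, IsConnAlloc G A ∧
      IsAlphaPMMS G (fun _ => u) A 1 ∧ IsAlphaMMS G (fun _ => u) A 1 := by
  classical
  -- main part: every leximin allocation is PMMS and MMS
  have main : ∀ A : Fin n → Finset V, IsLeximin G (fun _ => u) A →
      IsAlphaPMMS G (fun _ => u) A 1 ∧ IsAlphaMMS G (fun _ => u) A 1 := by
    intro A hA
    obtain ⟨hAconn, hAlex⟩ := hA
    -- decomposition of the multiset of utilities with respect to two distinct agents
    have hdecomp : ∀ (i j : Fin n), i ≠ j → ∀ (C : Fin n → Finset V),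
        (Finset.univ.val.map fun t => u (C t)) =
          u (C i) ::ₘ u (C j) ::ₘ (((Finset.univ.val.erase i).erase j).map fun t => u (C t)) := by
      intro i j hij C
      have hiu : i ∈ (Finset.univ : Finset (Fin n)).val := Finset.mem_univ_val i
      have hju : j ∈ (Finset.univ : Finset (Fin n)).val.erase i :=
        (Multiset.mem_erase_of_ne hij.symm).mpr (Finset.mem_univ_val j)
      conv_lhs => rw [← Multiset.cons_erase hiu, ← Multiset.cons_erase hju]
      simp [Multiset.map_cons]
    constructor
    · -- PMMS
      intro i j hij _
      rw [one_mul]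
      refine Real.sSup_le ?_ (hu _)
      rintro x ⟨⟨Y, Z⟩, hYZ, rfl⟩
      obtain ⟨hunion, hdisj, hYc, hZc⟩ := hYZ
      simp only at hunion hdisj hYc hZc ⊢
      by_contra hgt
      push_neg at hgt
      have hY : u (A i) < u Y := lt_of_lt_of_le hgt (min_le_left _ _)
      have hZ : u (A i) < u Z := lt_of_lt_of_le hgt (min_le_right _ _)
      -- build the improved allocation
      set B : Fin n → Finset V := fun t => if t = i then Y else if t = j then Z else A t with hBdef
      have hBi : B i = Y := by simp [hBdef]
      have hBj : B j = Z := by simp [hBdef, hij.symm]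
      have hBo : ∀ t, t ≠ i → t ≠ j → B t = A t := by
        intro t h1 h2; simp [hBdef, h1, h2]
      have hYsub : Y ⊆ A i ∪ A j := hunion ▸ Finset.subset_union_left
      have hZsub : Z ⊆ A i ∪ A j := hunion ▸ Finset.subset_union_right
      have hdisjA : ∀ t, t ≠ i → t ≠ j → Disjoint (A i ∪ A j) (A t) := by
        intro t h1 h2
        exact Finset.disjoint_union_left.mpr
          ⟨hAconn.2.1 i t (by exact fun h => h1 h.symm), hAconn.2.1 j t (by exact fun h => h2 h.symm)⟩
      have hBconn : IsConnAlloc G B := by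
        refine ⟨?_, ?_, ?_⟩
        · intro v
          obtain ⟨t, ht⟩ := hAconn.1 v
          by_cases h1 : t = i
          · have ht' : v ∈ A i := h1 ▸ ht
            have : v ∈ Y ∪ Z := hunion ▸ Finset.mem_union_left _ ht'
            rcases Finset.mem_union.mp this with h | h
            · exact ⟨i, hBi ▸ h⟩
            · exact ⟨j, hBj ▸ h⟩
          · by_cases h2 : t = j
            · have ht' : v ∈ A j := h2 ▸ ht
              have : v ∈ Y ∪ Z := hunion ▸ Finset.mem_union_right _ ht'
              rcases Finset.mem_union.mp this with h | h
              · exact ⟨i, hBi ▸ h⟩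
              · exact ⟨j, hBj ▸ h⟩
            · exact ⟨t, (hBo t h1 h2) ▸ ht⟩
        · intro s t hst
          have key : ∀ s t : Fin n, s ≠ t → s = i ∨ s = j ∨ (s ≠ i ∧ s ≠ j) → Disjoint (B s) (B t) := by
            intro s t hst _
            by_cases hs1 : s = i
            · subst hs1
              by_cases ht2 : t = j
              · subst ht2; rw [hBi, hBj]; exact hdisj
              · rw [hBi, hBo t (fun h => hst h.symm) ht2]
                exact Finset.disjoint_of_subset_left hYsub (hdisjA t (fun h => hst h.symm) ht2)
            · by_cases hs2 : s = j
              · subst hs2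
                by_cases ht1 : t = i
                · subst ht1; rw [hBj, hBi]; exact hdisj.symm
                · rw [hBj, hBo t ht1 (fun h => hst h.symm)]
                  exact Finset.disjoint_of_subset_left hZsub (hdisjA t ht1 (fun h => hst h.symm))
              · rw [hBo s hs1 hs2]
                by_cases ht1 : t = i
                · subst ht1
                  rw [hBi]
                  exact (Finset.disjoint_of_subset_left hYsub (hdisjA s hs1 hs2)).symm
                · by_cases ht2 : t = j
                  · subst ht2
                    rw [hBj]
                    exact (Finset.disjoint_of_subset_left hZsub (hdisjA s hs1 hs2)).symm
                  · rw [hBo t ht1 ht2]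
                    exact hAconn.2.1 s t hst
          exact key s t hst (by tauto)
        · intro t
          by_cases h1 : t = i
          · subst h1; rw [hBi]; exact hYc
          · by_cases h2 : t = j
            · subst h2; rw [hBj]; exact hZc
            · rw [hBo t h1 h2]; exact hAconn.2.2 t
      refine hAlex B hBconn ?_
      unfold LeximinImproves sortedUtils
      rw [hdecomp i j hij A, hdecomp i j hij B]
      have hmap : (((Finset.univ.val.erase i).erase j).map fun t => u (B t)) =
          (((Finset.univ.val.erase i).erase j).map fun t => u (A t)) := by
        refine Multiset.map_congr rfl ?_
        intro x hx
        have hnd : ((Finset.univ : Finset (Fin n)).val.erase i).Nodup :=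
          (Finset.univ.nodup).erase i
        have hx2 := (Multiset.Nodup.mem_erase_iff hnd).mp hx
        have hx3 := (Multiset.Nodup.mem_erase_iff (Finset.univ.nodup)).mp hx2.2
        rw [hBo x hx3.1 hx2.1]
      rw [hBi, hBj, hmap]
      exact gf_lex_sort_replace _ _ _ _ _ hY hZ
    · -- MMS
      intro i
      rw [one_mul]
      refine Real.sSup_le ?_ (hu _)
      rintro x ⟨C, hC, rfl⟩
      have hnoimp := hAlex C hC
      unfold LeximinImproves at hnoimp
      set LA := sortedUtils (fun _ => (u : Finset V → ℝ)) A with hLAdef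
      set LC := sortedUtils (fun _ => (u : Finset V → ℝ)) C with hLCdef
      have hLAs : LA.Pairwise (· ≤ ·) := Multiset.pairwise_sort _ _
      have hLCs : LC.Pairwise (· ≤ ·) := Multiset.pairwise_sort _ _
      have hLAlen : 0 < LA.length := by
        simp only [hLAdef, sortedUtils, Multiset.length_sort, Multiset.card_map]
        simpa using hn
      have hLClen : 0 < LC.length := by
        simp only [hLCdef, sortedUtils, Multiset.length_sort, Multiset.card_map]
        simpa using hn
      have hheads : (LC[0]'hLClen) ≤ (LA[0]'hLAlen) := by
        by_contra hgt
        push_neg at hgt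
        exact hnoimp (gf_lex_of_prefix 0 LA LC hLAlen hLClen (by omega) hgt)
      have hC0 : ∃ t, u (C t) = LC[0]'hLClen := by
        have hmem : (LC[0]'hLClen) ∈ LC := List.getElem_mem hLClen
        have : (LC[0]'hLClen) ∈ (Finset.univ.val.map fun t => u (C t)) := by
          rw [← Multiset.sort_eq (α := ℝ) (Finset.univ.val.map fun t => u (C t)) (· ≤ ·)]
          exact hmem
        obtain ⟨t, _, ht⟩ := Multiset.mem_map.mp this
        exact ⟨t, ht⟩
      obtain ⟨t0, ht0⟩ := hC0
      have h1 : (⨅ t, u (C t)) ≤ LC[0]'hLClen := ht0 ▸ ciInf_le (Finite.bddBelow_range _) t0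
      have h2 : (LA[0]'hLAlen) ≤ u (A i) := by
        refine gf_sorted_head_le hLAs hLAlen ?_
        have : u (A i) ∈ (Finset.univ.val.map fun t => u (A t)) :=
          Multiset.mem_map.mpr ⟨i, Finset.mem_univ_val i, rfl⟩
        rw [← Multiset.sort_eq (α := ℝ) (Finset.univ.val.map fun t => u (A t)) (· ≤ ·)] at this
        exact this
      exact le_trans h1 (le_trans hheads h2)
  refine ⟨main, ?_⟩
  -- existence of a leximin allocation
  have hVne : Nonempty V := hG.nonempty
  set i0 : Fin n := ⟨0, hn⟩ with hi0
  set A0 : Fin n → Finset V := fun t => if t = i0 then (Finset.univ : Finset V) else ∅ with hA0def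
  have hA0conn : IsConnAlloc G A0 := by
    refine ⟨fun v => ⟨i0, by simp [hA0def]⟩, ?_, ?_⟩
    · intro s t hst
      by_cases hs : s = i0
      · have ht : t ≠ i0 := by rw [hs] at hst; exact fun h => hst h.symm
        simp [hA0def, hs, ht]
      · simp [hA0def, hs]
    · intro t
      by_cases ht : t = i0
      · right
        have hAt : A0 t = (Finset.univ : Finset V) := by simp [hA0def, ht]
        rw [hAt, Finset.coe_univ]
        exact (SimpleGraph.induceUnivIso G).connected_iff.mpr hG
      · left; simp [hA0def, ht]
  set S : Set (Fin n → Finset V) := {A | IsConnAlloc G A} with hSdef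
  have hSfin : S.Finite := Set.toFinite S
  have hSne : S.Nonempty := ⟨A0, hA0conn⟩
  obtain ⟨A, hAS, hmax⟩ :=
    hSfin.exists_maximalFor (fun A => sortedUtils (fun _ => (u : Finset V → ℝ)) A) S hSne
  have hAlex : IsLeximin G (fun _ => u) A := by
    refine ⟨hAS, ?_⟩
    intro B hB himp
    have hlt : sortedUtils (fun _ => (u : Finset V → ℝ)) A <
        sortedUtils (fun _ => (u : Finset V → ℝ)) B := himp
    have heq := hmax hB (le_of_lt hlt)
    exact absurd heq (not_le.mpr hlt)
  obtain ⟨h1, h2⟩ := main A hAlex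
  exact ⟨A, hAS, h1, h2⟩
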